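/- arXiv:1102.1312 — 4 statements merged into one kernel-verified Lean document; each statement's English description precedes it below -/
import Mathlib

section
/- For all integers a, b ≥ 0 and every integer r with 1 ≤ r ≤ a+b+1: Σ C(2r, 2α+2) − Σ' C(2r, 2β+2) + 𝟙(b ≥ r) − 𝟙(a ≥ r) = C(2r, 2a+2), where the first sum Σ is over all integers α, β ≥ 0 with α+β+1 = r, α ≤ a and β ≤ b, the second sum Σ' is over all integers α, β ≥ 0 with α+β+1 = r, α ≤ a and β ≤ b−1, and 𝟙 denotes the indicator function (equal to 1 if the condition holds and 0 otherwise). -/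
/-- Compatibility identity for the coefficients `A^r_{a,b} = C(2r, 2a+2)`:
`Σ C(2r,2α+2) − Σ' C(2r,2β+2) + 𝟙(b ≥ r) − 𝟙(a ≥ r) = C(2r,2a+2)`,
where both sums are over `α+β+1 = r` with `α ≤ a`, and `β ≤ b` (resp. `β ≤ b−1`). -/
theorem A_compatibility (a b r : ℕ) (h1 : 1 ≤ r) (h2 : r ≤ a + b + 1) :
    (∑ p ∈ (Finset.HasAntidiagonal.antidiagonal (r - 1)).filter (fun p => p.1 ≤ a ∧ p.2 ≤ b),
        ((2 * r).choose (2 * p.1 + 2) : ℤ)) -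
      (∑ p ∈ (Finset.HasAntidiagonal.antidiagonal (r - 1)).filter (fun p => p.1 ≤ a ∧ p.2 < b),
        ((2 * r).choose (2 * p.2 + 2) : ℤ)) +
      (if r ≤ b then (1 : ℤ) else 0) - (if r ≤ a then (1 : ℤ) else 0) =
      ((2 * r).choose (2 * a + 2) : ℤ) := by
  set g : ℕ → ℤ := fun α => if α ≤ a ∧ r ≤ b + α then ((2 * r).choose (2 * α) : ℤ) else 0
    with hg
  have key1 :
      (∑ p ∈ (Finset.HasAntidiagonal.antidiagonal (r - 1)).filter (fun p => p.1 ≤ a ∧ p.2 ≤ b),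
        ((2 * r).choose (2 * p.1 + 2) : ℤ)) =
      ∑ α ∈ Finset.range r,
        (if α ≤ a ∧ r ≤ b + α + 1 then ((2 * r).choose (2 * α + 2) : ℤ) else 0) := by
    rw [Finset.sum_filter, Finset.Nat.sum_antidiagonal_eq_sum_range_succ_mk,
      show (r-1).succ = r by omega]
    refine Finset.sum_congr rfl fun i hi => ?_
    have hir : i ≤ r - 1 := Nat.le_sub_one_of_lt (Finset.mem_range.mp hi)
    congr 1
    simp only [eq_iff_iff, and_congr_right_iff]
    intro _
    omega
  have key2 :
      (∑ p ∈ (Finset.HasAntidiagonal.antidiagonal (r - 1)).filter (fun p => p.1 ≤ a ∧ p.2 < b),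
        ((2 * r).choose (2 * p.2 + 2) : ℤ)) = ∑ α ∈ Finset.range r, g α := by
    rw [Finset.sum_filter, Finset.Nat.sum_antidiagonal_eq_sum_range_succ_mk,
      show (r-1).succ = r by omega]
    refine Finset.sum_congr rfl fun i hi => ?_
    have hir : i < r := Finset.mem_range.mp hi
    have hcond : (i ≤ a ∧ r - 1 - i < b) ↔ (i ≤ a ∧ r ≤ b + i) := by omega
    have hval : 2 * (r - 1 - i) + 2 = 2 * r - 2 * i := by omega
    have hsymm : (2 * r).choose (2 * r - 2 * i) = (2 * r).choose (2 * i) :=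
      Nat.choose_symm (by omega)
    simp only [hg, hcond, hval, hsymm]
  rw [key1, key2, ← Finset.sum_sub_distrib]
  have step : ∀ α ∈ Finset.range r,
      (if α ≤ a ∧ r ≤ b + α + 1 then ((2 * r).choose (2 * α + 2) : ℤ) else 0) - g α =
      (g (α + 1) - g α) + (if α = a then ((2 * r).choose (2 * a + 2) : ℤ) else 0) := by
    intro α hα
    have hg1 : g (α + 1) =
        if α + 1 ≤ a ∧ r ≤ b + α + 1 then ((2 * r).choose (2 * α + 2) : ℤ) else 0 := by
      simp only [hg, show b + (α + 1) = b + α + 1 from by ring,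
        show 2 * (α + 1) = 2 * α + 2 from by ring]
    rw [hg1]
    by_cases hea : α = a
    · subst hea
      have : r ≤ b + α + 1 := by omega
      simp [this]
      ring
    · simp only [if_neg hea, add_zero]
      by_cases h3 : α ≤ a
      · have h4 : α + 1 ≤ a := by omega
        simp [h3, h4]
      · have h4 : ¬ (α + 1 ≤ a) := by omega
        simp [h3, h4]
  rw [Finset.sum_congr rfl step, Finset.sum_add_distrib, Finset.sum_range_sub g,
    Finset.sum_ite_eq' (Finset.range r) a fun _ => ((2 * r).choose (2 * a + 2) : ℤ)]
  have hgr : g r = if r ≤ a then (1 : ℤ) else 0 := by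
    simp only [hg]
    by_cases h : r ≤ a <;> simp [h, Nat.choose_self, show r ≤ b + r by omega]
  have hg0 : g 0 = if r ≤ b then (1 : ℤ) else 0 := by
    simp only [hg]
    by_cases h : r ≤ b <;> simp [h]
  rw [hgr, hg0]
  by_cases har : a < r
  · simp only [Finset.mem_range.mpr har, if_true]
    ring
  · have : (2 * r).choose (2 * a + 2) = 0 := Nat.choose_eq_zero_of_lt (by omega)
    simp [this, Finset.mem_range, har]
end

section
/- For all integers a, b ≥ 0 with n = a+b+1, the rational numbers c_{a,b} and c_{0,a+b} are nonzero and their 2-adic valuations satisfy v_2(c_{0,a+b}) ≤ v_2(c_{a,b}) ≤ 0. -/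
/-- The coefficient `c_{a,b} = 2(−1)^n (C(2n,2a+2) − (1−2^{−2n}) C(2n,2b+1))`
with `n = a+b+1`, appearing in Zagier's evaluation of `ζ(2^{a},3,2^{b})`. -/
noncomputable def zagierCoeff (a b : ℕ) : ℚ :=
  2 * (-1) ^ (a + b + 1) *
    (((2 * (a + b + 1)).choose (2 * a + 2) : ℚ) -
      (1 - (2 : ℚ) ^ (-(2 * (a + b + 1) : ℤ))) * ((2 * (a + b + 1)).choose (2 * b + 1) : ℚ))

lemma zagier_key (a b : ℕ) :
    zagierCoeff a b ≠ 0 ∧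
      padicValRat 2 (zagierCoeff a b) =
        1 - 2 * (a + b + 1 : ℤ) + padicValNat 2 ((2 * (a + b + 1)).choose (2 * b + 1)) ∧
      padicValNat 2 ((2 * (a + b + 1)).choose (2 * b + 1)) < 2 * (a + b + 1) := by
  set n : ℕ := a + b + 1 with hn
  set A : ℕ := (2 * n).choose (2 * a + 2) with hA
  set B : ℕ := (2 * n).choose (2 * b + 1) with hB
  set v : ℕ := padicValNat 2 B with hv
  have hB0 : 0 < B := Nat.choose_pos (by omega)
  -- B < 2 ^ (2n)
  have hBlt : B < 2 ^ (2 * n) := by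
    have hsum := Nat.sum_range_choose (2 * n)
    have h1 : (2 * b + 1) ∈ Finset.range (2 * n + 1) := by
      simp; omega
    have h0 : (0 : ℕ) ∈ Finset.range (2 * n + 1) := by simp
    have hlt := Finset.single_lt_sum (f := fun i => (2 * n).choose i)
      (show (0:ℕ) ≠ 2 * b + 1 by omega) h1 h0 (by simp) (by intros; positivity)
    simp only [hsum] at hlt
    omega
  have hdvd : 2 ^ v ∣ B := pow_padicValNat_dvd
  obtain ⟨B', hB'⟩ := hdvd
  have hB'odd : ¬ (2 ∣ B') := by
    intro ⟨c, hc⟩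
    have : 2 ^ (v + 1) ∣ B := ⟨c, by rw [hB', hc]; ring⟩
    exact (pow_succ_padicValNat_not_dvd hB0.ne' : ¬ 2 ^ (v+1) ∣ B) this
  have hvlt : v < 2 * n := by
    have h2 : 2 ^ v ≤ B := Nat.le_of_dvd hB0 ⟨B', hB'⟩
    have := lt_of_le_of_lt h2 hBlt
    exact (pow_lt_pow_iff_right₀ (by norm_num)).mp this
  set w : ℤ := B' + 2 ^ (2 * n - v) * ((A : ℤ) - B) with hw
  have hwodd : ¬ ((2 : ℤ) ∣ w) := by
    intro ⟨c, hc⟩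
    apply hB'odd
    have h2n : (2 : ℤ) ∣ 2 ^ (2 * n - v) := dvd_pow_self 2 (by omega)
    obtain ⟨d, hd⟩ := h2n
    have hBint : (B' : ℤ) = 2 * (c - d * ((A : ℤ) - B)) := by
      rw [hw, hd] at hc; linarith
    have : (2 : ℤ) ∣ (B' : ℤ) := ⟨_, hBint⟩
    exact_mod_cast this
  have hw0 : w ≠ 0 := fun h => hwodd (h ▸ dvd_zero 2)
  -- the factorization of zagierCoeff
  have hfact : zagierCoeff a b = (-1) ^ n * ((2 ^ (v + 1) : ℚ) / 2 ^ (2 * n)) * w := by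
    have h2n0 : ((2 : ℚ) ^ (2 * n)) ≠ 0 := by positivity
    have hBq : (B : ℚ) = 2 ^ v * B' := by exact_mod_cast congrArg (Nat.cast : ℕ → ℚ) hB'
    have hsplit : (2 : ℚ) ^ (2 * n) = 2 ^ (2 * n - v) * 2 ^ v := by
      rw [← pow_add]; congr 1; omega
    have hAB : zagierCoeff a b = 2 * (-1) ^ n * ((A : ℚ) - (1 - ((2 : ℚ) ^ (2 * n))⁻¹) * B) := by
      simp only [zagierCoeff, hA, hB, hn]
      rw [show (-(2 * (a + b + 1) : ℤ)) = -((2 * (a + b + 1) : ℕ) : ℤ) by push_cast; ring,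
        zpow_neg, zpow_natCast]
    rw [hAB, hw]
    push_cast
    rw [hBq, hsplit, pow_succ]
    field_simp
    ring
  have hc0 : zagierCoeff a b ≠ 0 := by
    rw [hfact]
    have : (w : ℚ) ≠ 0 := by exact_mod_cast hw0
    positivity
  refine ⟨hc0, ?_, hvlt⟩
  rw [hfact]
  have h1 : ((-1 : ℚ) ^ n) * ((2 ^ (v + 1) : ℚ) / 2 ^ (2 * n)) * w =
      (-1 : ℚ) ^ n * (((2 ^ (v + 1) : ℚ) / 2 ^ (2 * n)) * w) := by ring
  have hwq : (w : ℚ) ≠ 0 := by exact_mod_cast hw0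
  have hx : ((2 ^ (v + 1) : ℚ) / 2 ^ (2 * n)) * w ≠ 0 := by positivity
  have hsign : padicValRat 2 ((-1 : ℚ) ^ n * (((2 ^ (v + 1) : ℚ) / 2 ^ (2 * n)) * w)) =
      padicValRat 2 (((2 ^ (v + 1) : ℚ) / 2 ^ (2 * n)) * w) := by
    rcases Nat.even_or_odd n with h | h
    · rw [h.neg_one_pow, one_mul]
    · rw [h.neg_one_pow, neg_one_mul, padicValRat.neg]
  rw [h1, hsign]
  rw [padicValRat.mul (by positivity) hwq,
    padicValRat.div (by positivity) (by positivity),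
    padicValRat.pow (q := (2:ℚ)), padicValRat.pow (q := (2:ℚ)),
    padicValRat.of_int,
    padicValInt.eq_zero_of_not_dvd (by exact_mod_cast hwodd)]
  have h2 : padicValRat 2 (2 : ℚ) = 1 := by
    simpa using padicValRat.self (p := 2) one_lt_two
  rw [h2]
  push_cast [hn]
  ring


lemma zagier_dvd (a b : ℕ) :
    padicValNat 2 (2 * (a + b + 1)) ≤
      padicValNat 2 ((2 * (a + b + 1)).choose (2 * b + 1)) := by
  set m : ℕ := 2 * (a + b) + 1 with hm
  have hkey := Nat.add_one_mul_choose_eq m (2 * b)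
  have hm1 : m + 1 = 2 * (a + b + 1) := by omega
  have hC0 : 0 < m.choose (2 * b) := Nat.choose_pos (by omega)
  have hB0 : 0 < (m + 1).choose (2 * b + 1) := Nat.choose_pos (by omega)
  have hlhs : padicValNat 2 (Nat.succ m * m.choose (2 * b)) =
      padicValNat 2 (m + 1) + padicValNat 2 (m.choose (2 * b)) :=
    padicValNat.mul (by omega) hC0.ne'
  have hrhs : padicValNat 2 ((m + 1).choose (2 * b + 1) * (2 * b + 1)) =
      padicValNat 2 ((m + 1).choose (2 * b + 1)) + padicValNat 2 (2 * b + 1) :=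
    padicValNat.mul hB0.ne' (by omega)
  have hodd : padicValNat 2 (2 * b + 1) = 0 :=
    padicValNat.eq_zero_of_not_dvd (by omega)
  rw [hkey, hrhs, hodd] at hlhs
  rw [← hm1]
  have h1 : Nat.succ (2 * b) = 2 * b + 1 := rfl
  omega


/-- `c_{a,b}` and `c_{0,a+b}` are nonzero and `v₂(c_{0,a+b}) ≤ v₂(c_{a,b}) ≤ 0`. -/
theorem zagierCoeff_two_adic_bounds (a b : ℕ) :
    zagierCoeff a b ≠ 0 ∧ zagierCoeff 0 (a + b) ≠ 0 ∧
      padicValRat 2 (zagierCoeff 0 (a + b)) ≤ padicValRat 2 (zagierCoeff a b) ∧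
      padicValRat 2 (zagierCoeff a b) ≤ 0 := by
  obtain ⟨h1, h2, h3⟩ := zagier_key a b
  obtain ⟨h1', h2', h3'⟩ := zagier_key 0 (a + b)
  have hch : (2 * (0 + (a + b) + 1)).choose (2 * (a + b) + 1) = 2 * (a + b + 1) := by
    have hs := Nat.choose_symm (n := 2 * (a + b + 1)) (k := 2 * (a + b) + 1) (by omega)
    have hd : 2 * (a + b + 1) - (2 * (a + b) + 1) = 1 := by omega
    rw [hd, Nat.choose_one_right] at hs
    rw [show 2 * (0 + (a + b) + 1) = 2 * (a + b + 1) by omega, ← hs]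
  have hdvd := zagier_dvd a b
  refine ⟨h1, h1', ?_, ?_⟩
  · rw [h2, h2', hch]
    omega
  · rw [h2]
    omega
end

section
/- For all integers a, b ≥ 0 with n = a+b+1, the 2-adic valuation of c_{a,b} is given exactly by v_2(c_{a,b}) = 2 − 2n + v_2(n) + v_2( C(2n−1, 2b) ). -/
/-- `v₂(c_{a,b}) = 2 − 2n + v₂(n) + v₂(C(2n−1, 2b))` where `n = a+b+1`. -/
theorem zagierCoeff_two_adic_valuation (a b : ℕ) :
    padicValRat 2 (zagierCoeff a b) =
      (2 : ℤ) - 2 * (a + b + 1 : ℤ) + (padicValNat 2 (a + b + 1) : ℤ) +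
        (padicValNat 2 ((2 * (a + b + 1) - 1).choose (2 * b)) : ℤ) := by
  set n := a + b + 1 with hn_def
  set C : ℕ := (2 * n).choose (2 * b) with hC_def
  set C' : ℕ := (2 * n).choose (2 * b + 1) with hC'_def
  set B : ℕ := (2 * n - 1).choose (2 * b) with hB_def
  have hC'pos : 0 < C' := Nat.choose_pos (by omega)
  have hCpos : 0 < C := Nat.choose_pos (by omega)
  have hBpos : 0 < B := Nat.choose_pos (by omega)
  -- symmetry
  have hsymm : (2 * n).choose (2 * a + 2) = C := by
    rw [hC_def, show 2 * b = 2 * n - (2 * a + 2) by omega, Nat.choose_symm (by omega)]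
  -- C' < 2 ^ (2 n)
  have hC'lt : C' < 2 ^ (2 * n) := by
    have hsum := Nat.sum_range_choose (2 * n)
    have hsub : ({0, 2 * b + 1} : Finset ℕ) ⊆ Finset.range (2 * n + 1) := by
      intro x hx
      simp only [Finset.mem_insert, Finset.mem_singleton] at hx
      rcases hx with h | h <;> simp [h] <;> omega
    have hle := Finset.sum_le_sum_of_subset (f := fun m => (2 * n).choose m) hsub
    rw [Finset.sum_pair (by omega : (0:ℕ) ≠ 2 * b + 1), hsum] at hle
    simp only [Nat.choose_zero_right] at hle
    omega
  have hval2 : padicValRat 2 (2 : ℚ) = 1 := by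
    simpa using padicValRat.self (p := 2) one_lt_two
  set v : ℕ := padicValNat 2 C' with hv_def
  have hvlt : v < 2 * n := by
    have hdvd : 2 ^ v ∣ C' := pow_padicValNat_dvd
    have : 2 ^ v ≤ C' := Nat.le_of_dvd hC'pos hdvd
    have : 2 ^ v < 2 ^ (2 * n) := lt_of_le_of_lt this hC'lt
    exact (pow_lt_pow_iff_right₀ (by norm_num)).mp this
  -- C ≠ C'
  have hCne : C ≠ C' := by
    intro h
    have := Nat.choose_succ_right_eq (2 * n) (2 * b)
    rw [← hC_def, ← hC'_def, h] at this
    have h2 : 2 * n - 2 * b = 2 * a + 2 := by omega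
    rw [h2] at this
    have := Nat.eq_of_mul_eq_mul_left hC'pos (by linarith [this] : C' * (2 * b + 1) = C' * (2 * a + 2))
    omega
  -- valuations of the two summands
  have hq0 : ((C' : ℚ)) ≠ 0 := by positivity
  have hD0 : ((C : ℚ) - (C' : ℚ)) ≠ 0 := by
    intro h
    exact hCne (by exact_mod_cast sub_eq_zero.mp h)
  have hr0 : (2 : ℚ) ^ (2 * n) * ((C : ℚ) - (C' : ℚ)) ≠ 0 := by
    exact mul_ne_zero (by positivity) hD0
  have hvq : padicValRat 2 (C' : ℚ) = v := by
    rw [padicValRat.of_nat]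
  have hDval : (0 : ℤ) ≤ padicValRat 2 ((C : ℚ) - (C' : ℚ)) := by
    have : ((C : ℚ) - (C' : ℚ)) = (((C : ℤ) - (C' : ℤ) : ℤ) : ℚ) := by push_cast; ring
    rw [this, padicValRat.of_int]
    exact Int.natCast_nonneg _
  have hvr : (v : ℤ) < padicValRat 2 ((2 : ℚ) ^ (2 * n) * ((C : ℚ) - (C' : ℚ))) := by
    rw [padicValRat.mul (by positivity) hD0, padicValRat.pow, hval2, mul_one]
    have h1 : (v : ℤ) < 2 * n := by exact_mod_cast hvlt
    push_cast
    linarith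
  have hsum0 : (C' : ℚ) + (2 : ℚ) ^ (2 * n) * ((C : ℚ) - (C' : ℚ)) ≠ 0 := by
    intro h
    have h2 : (2 : ℚ) ^ (2 * n) * ((C : ℚ) - (C' : ℚ)) = -(C' : ℚ) := by linarith
    rw [h2, padicValRat.neg, hvq] at hvr
    exact lt_irrefl _ hvr
  have hvsum : padicValRat 2 ((C' : ℚ) + (2 : ℚ) ^ (2 * n) * ((C : ℚ) - (C' : ℚ))) = v := by
    rw [padicValRat.add_eq_of_lt hsum0 hq0 hr0 (by rw [hvq]; exact hvr), hvq]
  -- key identity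
  have key : zagierCoeff a b * 2 ^ (2 * n) =
      (-1 : ℚ) ^ n * (2 * ((C' : ℚ) + (2 : ℚ) ^ (2 * n) * ((C : ℚ) - (C' : ℚ)))) := by
    unfold zagierCoeff
    rw [← hn_def, hsymm, ← hC'_def]
    have hz : (2 : ℚ) ^ (-(2 * ((a : ℤ) + b + 1))) = ((2 : ℚ) ^ (2 * n))⁻¹ := by
      rw [zpow_neg]
      norm_cast
    push_cast at hz ⊢
    rw [hz]
    field_simp
    ring
  -- zagierCoeff ≠ 0
  have hc0 : zagierCoeff a b ≠ 0 := by
    intro h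
    rw [h, zero_mul] at key
    have : ((-1 : ℚ) ^ n) ≠ 0 := by positivity
    exact (mul_ne_zero this (mul_ne_zero two_ne_zero hsum0)) key.symm
  -- take valuations in key
  have hval : padicValRat 2 (zagierCoeff a b) + 2 * n = 1 + v := by
    have lhs : padicValRat 2 (zagierCoeff a b * 2 ^ (2 * n)) =
        padicValRat 2 (zagierCoeff a b) + 2 * n := by
      rw [padicValRat.mul hc0 (by positivity), padicValRat.pow, hval2, mul_one]
      push_cast; ring
    have rhs : padicValRat 2 ((-1 : ℚ) ^ n * (2 * ((C' : ℚ) + (2 : ℚ) ^ (2 * n) * ((C : ℚ) - (C' : ℚ))))) = 1 + v := by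
      rcases Nat.even_or_odd n with he | ho
      · rw [he.neg_one_pow, one_mul, padicValRat.mul two_ne_zero hsum0, hval2, hvsum]
      · rw [ho.neg_one_pow, neg_one_mul, padicValRat.neg, padicValRat.mul two_ne_zero hsum0,
          hval2, hvsum]
    rw [← lhs, key, rhs]
  -- convert v
  have hBv : v = 1 + padicValNat 2 n + padicValNat 2 B := by
    have hid : 2 * n * B = C' * (2 * b + 1) := by
      have := Nat.add_one_mul_choose_eq (2 * n - 1) (2 * b)
      rw [show 2 * n - 1 + 1 = 2 * n by omega] at this
      rw [hB_def, hC'_def]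
      exact this
    have h1 : padicValNat 2 (2 * n * B) = 1 + padicValNat 2 n + padicValNat 2 B := by
      rw [padicValNat.mul (by omega) (by omega), padicValNat.mul (by omega) (by omega),
        padicValNat.self (by norm_num)]
    have h2 : padicValNat 2 (C' * (2 * b + 1)) = v := by
      rw [padicValNat.mul (by omega) (by omega),
        padicValNat.eq_zero_of_not_dvd (p := 2) (n := 2 * b + 1) (by omega), add_zero]
    rw [← h2, ← hid, h1]
  rw [hBv] at hval
  push_cast at hval ⊢
  linarith
end

section
/- Let p be a prime number and let A = (a_{ij}) be an n×n matrix with rational entries such that: (i) v_p(a_{ij}) ≥ 1 for all i > j, and (ii) for every j, v_p(a_{jj}) = min_i v_p(a_{ij}) ≤ 0. Then A is invertible, i.e. det(A) ≠ 0. (Indeed, v_p(det A) = Σ_{j=1}^n v_p(a_{jj}).) -/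
open Finset

private lemma padicNorm_prod (p : ℕ) [Fact p.Prime] {ι : Type*} (s : Finset ι) (f : ι → ℚ) :
    padicNorm p (∏ i ∈ s, f i) = ∏ i ∈ s, padicNorm p (f i) := by
  classical
  induction s using Finset.induction with
  | empty => simp
  | insert _ _ h ih => rw [Finset.prod_insert h, Finset.prod_insert h, padicNorm.mul, ih]

private lemma perm_exists_lt {n : ℕ} (σ : Equiv.Perm (Fin n)) (h : σ ≠ 1) : ∃ j, j < σ j := by
  by_contra hc
  push_neg at hc
  apply h
  have key : ∀ m : ℕ, ∀ j : Fin n, (j : ℕ) ≤ m → σ j = j := by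
    intro m
    induction m with
    | zero =>
      intro j hj
      have h1 : σ j ≤ j := hc j
      have h2 : ((σ j : Fin n) : ℕ) ≤ (j : ℕ) := h1
      exact Fin.ext (by omega)
    | succ m ih =>
      intro j hj
      rcases lt_or_eq_of_le (hc j) with hlt | heq
      · exfalso
        have hv : ((σ j : Fin n) : ℕ) ≤ m := Nat.lt_succ_iff.mp (lt_of_lt_of_le hlt hj)
        have := ih (σ j) hv
        exact absurd (σ.injective this) (ne_of_lt hlt)
      · exact heq
  ext j
  exact congrArg Fin.val (key (j : ℕ) j le_rfl)

set_option maxHeartbeats 1000000 in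
/-- Let `p` be a prime and `A` an `n×n` rational matrix such that
(i) `v_p(a_{ij}) ≥ 1` for `i > j` (with the convention `v_p(0) = ∞`, i.e. zero
entries are allowed below the diagonal), and
(ii) for every `j`, `v_p(a_{jj}) = min_i v_p(a_{ij}) ≤ 0` (in particular
`a_{jj} ≠ 0`, its valuation is `≤ 0`, and it minimizes the valuation in its column).
Then `A` is invertible, and `v_p(det A) = Σ_j v_p(a_{jj})`. -/
theorem det_ne_zero_of_p_adic_conditions (p : ℕ) (hp : p.Prime) (n : ℕ)
    (A : Matrix (Fin n) (Fin n) ℚ)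
    (h1 : ∀ i j, j < i → A i j = 0 ∨ 1 ≤ padicValRat p (A i j))
    (h2 : ∀ j, A j j ≠ 0 ∧ padicValRat p (A j j) ≤ 0 ∧
      ∀ i, A i j ≠ 0 → padicValRat p (A j j) ≤ padicValRat p (A i j)) :
    A.det ≠ 0 ∧ padicValRat p A.det = ∑ j, padicValRat p (A j j) := by
  classical
  haveI : Fact p.Prime := ⟨hp⟩
  have hp1 : (1 : ℚ) < p := by exact_mod_cast hp.one_lt
  have hp0 : (0 : ℚ) < p := by positivity
  -- basic norm facts
  have hdiag_ne : ∀ j, A j j ≠ 0 := fun j => (h2 j).1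
  have hdiag_ge1 : ∀ j, 1 ≤ padicNorm p (A j j) := by
    intro j
    rw [padicNorm.eq_zpow_of_nonzero (hdiag_ne j)]
    exact one_le_zpow₀ hp1.le (by linarith [(h2 j).2.1])
  have hcol : ∀ i j, padicNorm p (A i j) ≤ padicNorm p (A j j) := by
    intro i j
    by_cases h : A i j = 0
    · simp [h, padicNorm.nonneg]
    · rw [padicNorm.eq_zpow_of_nonzero h, padicNorm.eq_zpow_of_nonzero (hdiag_ne j)]
      exact zpow_le_zpow_right₀ hp1.le (by linarith [(h2 j).2.2 i h])
  have hbelow : ∀ i j : Fin n, j < i → padicNorm p (A i j) ≤ (p : ℚ)⁻¹ := by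
    intro i j hij
    rcases h1 i j hij with h | h
    · rw [h, padicNorm.zero]
      positivity
    · have hne : A i j ≠ 0 := by
        intro h0; rw [h0] at h; simp [padicValRat] at h
      rw [padicNorm.eq_zpow_of_nonzero hne]
      calc (p:ℚ) ^ (-padicValRat p (A i j)) ≤ (p:ℚ) ^ (-1 : ℤ) :=
            zpow_le_zpow_right₀ hp1.le (by linarith)
        _ = (p:ℚ)⁻¹ := by simp
  set N : ℚ := ∏ j, padicNorm p (A j j) with hN
  have hN0 : 0 < N := by
    rw [hN]
    exact Finset.prod_pos fun j _ =>
      (padicNorm.nonneg _).lt_of_ne (Ne.symm (padicNorm.nonzero (hdiag_ne j)))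
  -- term for a permutation
  set f : Equiv.Perm (Fin n) → ℚ := fun σ => Equiv.Perm.sign σ • ∏ i, A (σ i) i with hf
  have hdet : A.det = ∑ σ : Equiv.Perm (Fin n), f σ := Matrix.det_apply A
  have hnorm_f : ∀ σ, padicNorm p (f σ) = padicNorm p (∏ i, A (σ i) i) := by
    intro σ
    rcases Int.units_eq_one_or (Equiv.Perm.sign σ) with h | h <;>
      simp [hf, h, padicNorm.neg]
  have hid : padicNorm p (f 1) = N := by
    rw [hnorm_f, padicNorm_prod]
    simp [hN]
  have hother : ∀ σ : Equiv.Perm (Fin n), σ ≠ 1 → padicNorm p (f σ) ≤ (p:ℚ)⁻¹ * N := by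
    intro σ hσ
    obtain ⟨j0, hj0⟩ := perm_exists_lt σ hσ
    rw [hnorm_f, padicNorm_prod]
    rw [← Finset.prod_erase_mul Finset.univ _ (Finset.mem_univ j0),
        hN, ← Finset.prod_erase_mul Finset.univ _ (Finset.mem_univ j0)]
    rw [mul_comm ((p:ℚ)⁻¹) _, mul_assoc]
    refine mul_le_mul (Finset.prod_le_prod (fun i _ => padicNorm.nonneg _)
      (fun i _ => hcol (σ i) i)) ?_ (padicNorm.nonneg _)
      (Finset.prod_nonneg fun i _ => padicNorm.nonneg _)
    exact (hbelow _ _ hj0).trans (le_mul_of_one_le_left (by positivity) (hdiag_ge1 j0))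
  -- split the sum
  have hsplit : A.det = f 1 + ∑ σ ∈ Finset.univ.erase 1, f σ := by
    rw [hdet, Finset.add_sum_erase _ f (Finset.mem_univ 1)]
  have hrest : padicNorm p (∑ σ ∈ Finset.univ.erase 1, f σ) ≤ (p:ℚ)⁻¹ * N :=
    padicNorm.sum_le' (fun σ hσ => hother σ (Finset.ne_of_mem_erase hσ)) (by positivity)
  have hlt : (p:ℚ)⁻¹ * N < N := by
    nlinarith [inv_lt_one_of_one_lt₀ hp1]
  have hne : padicNorm p (f 1) ≠ padicNorm p (∑ σ ∈ Finset.univ.erase 1, f σ) := by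
    rw [hid]; exact ne_of_gt (lt_of_le_of_lt hrest hlt)
  have hdetnorm : padicNorm p A.det = N := by
    rw [hsplit, padicNorm.add_eq_max_of_ne hne, hid]
    exact max_eq_left (hrest.trans hlt.le)
  have hdet_ne : A.det ≠ 0 := by
    intro h0
    rw [h0, padicNorm.zero] at hdetnorm
    exact absurd hdetnorm.symm (ne_of_gt hN0)
  refine ⟨hdet_ne, ?_⟩
  have hNeq : N = (p : ℚ) ^ (-∑ j, padicValRat p (A j j)) := by
    have key : ∀ s : Finset (Fin n),
        ∏ j ∈ s, (p:ℚ) ^ (-padicValRat p (A j j)) = (p:ℚ) ^ (∑ j ∈ s, -padicValRat p (A j j)) := by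
      intro s
      induction s using Finset.induction with
      | empty => simp
      | insert _ _ h ih =>
        rw [Finset.prod_insert h, Finset.sum_insert h, ih, zpow_add₀ (ne_of_gt hp0)]
    rw [hN, Finset.prod_congr rfl fun j _ => padicNorm.eq_zpow_of_nonzero (hdiag_ne j), key,
      ← Finset.sum_neg_distrib]
  have := padicNorm.eq_zpow_of_nonzero (p := p) hdet_ne
  rw [hdetnorm, hNeq] at this
  have := zpow_right_injective₀ hp0 (ne_of_gt hp1) this
  linarith [neg_injective this]
end
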